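/- Let N be a positive integer, let a_1, a_2, …, a_N be real numbers, let q be a positive integer, and let t_0 be a positive integer. Then there exists an integer t with t_0 ≤ t ≤ t_0·q^N and integers x_1, x_2, …, x_N such that |t·a_n − x_n| ≤ 1/q for all 1 ≤ n ≤ N. -/

import Mathlib

/-- **Dirichlet's theorem on simultaneous Diophantine approximation**, with a
prescribed lower bound `t0` on the integer scale factor: given real numbers
`a 1, …, a N`, a positive integer `q` and a positive integer `t0`, there is an
integer `t` with `t0 ≤ t ≤ t0 * q ^ N` and integers `x 1, …, x N` such that
`|t * a n - x n| ≤ 1 / q` for all `n`. -/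
theorem dirichlet_with_lower_bound (N : ℕ) (hN : 1 ≤ N) (a : Fin N → ℝ)
    (q t0 : ℕ) (hq : 1 ≤ q) (ht0 : 1 ≤ t0) :
    ∃ t : ℤ, (t0 : ℤ) ≤ t ∧ t ≤ (t0 : ℤ) * (q : ℤ) ^ N ∧
      ∃ x : Fin N → ℤ, ∀ i : Fin N, |(t : ℝ) * a i - (x i : ℝ)| ≤ 1 / (q : ℝ) := by
  have hqR : (0 : ℝ) < (q : ℝ) := by exact_mod_cast hq
  set Q := q ^ N with hQ
  set u : ℕ → Fin N → ℝ := fun j i => ((j * t0 : ℕ) : ℝ) * a i with hu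
  have hfloor_lt : ∀ j i, ⌊(q : ℝ) * Int.fract (u j i)⌋ < (q : ℤ) := by
    intro j i
    rw [Int.floor_lt]
    push_cast
    nlinarith [Int.fract_lt_one (u j i), Int.fract_nonneg (u j i)]
  have hfloor_nonneg : ∀ j i, 0 ≤ ⌊(q : ℝ) * Int.fract (u j i)⌋ := by
    intro j i
    apply Int.floor_nonneg.2
    have := Int.fract_nonneg (u j i)
    positivity
  let f : Fin (Q + 1) → (Fin N → Fin q) := fun j i =>
    ⟨(⌊(q : ℝ) * Int.fract (u j i)⌋).toNat, by
      have h1 := hfloor_lt j i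
      omega⟩
  have hcard : Fintype.card (Fin N → Fin q) < Fintype.card (Fin (Q + 1)) := by
    simp [Q]
  obtain ⟨j1, j2, hne, hfeq⟩ := Fintype.exists_ne_map_eq_of_card_lt f hcard
  -- WLOG j1 < j2
  wlog hlt : (j1 : ℕ) < (j2 : ℕ) generalizing j1 j2
  · have hv : (j1:ℕ) ≠ (j2:ℕ) := fun h => hne (Fin.ext h)
    exact this j2 j1 hne.symm hfeq.symm (by omega)
  refine ⟨(t0 : ℤ) * ((j2 : ℕ) - (j1 : ℕ) : ℤ), ?_, ?_, ?_⟩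
  · nlinarith [Int.toNat_of_nonneg (by omega : (0:ℤ) ≤ ((j2:ℕ) : ℤ) - (j1:ℕ)),
      (by exact_mod_cast ht0 : (1:ℤ) ≤ (t0:ℤ)), (by omega : (1:ℤ) ≤ ((j2:ℕ):ℤ) - (j1:ℕ))]
  · have hj2 : ((j2 : ℕ) : ℤ) ≤ (Q : ℤ) := by exact_mod_cast Nat.lt_succ_iff.1 j2.isLt
    have : ((j2:ℕ):ℤ) - (j1:ℕ) ≤ (Q : ℤ) := by omega
    have ht0' : (0:ℤ) < (t0:ℤ) := by exact_mod_cast ht0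
    calc (t0:ℤ) * (((j2:ℕ):ℤ) - (j1:ℕ)) ≤ (t0:ℤ) * Q := by
          exact mul_le_mul_of_nonneg_left this (le_of_lt ht0')
      _ = (t0:ℤ) * (q:ℤ) ^ N := by push_cast [hQ]; ring
  · refine ⟨fun i => ⌊u (j2 : ℕ) i⌋ - ⌊u (j1 : ℕ) i⌋, fun i => ?_⟩
    have hfi : ⌊(q : ℝ) * Int.fract (u (j2:ℕ) i)⌋ = ⌊(q : ℝ) * Int.fract (u (j1:ℕ) i)⌋ := by
      have := congrFun hfeq i
      have h1 := hfloor_nonneg (j1:ℕ) i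
      have h2 := hfloor_nonneg (j2:ℕ) i
      have := Fin.mk.injEq _ _ _ _ ▸ this
      omega
    have habs : |(q:ℝ) * Int.fract (u (j2:ℕ) i) - (q:ℝ) * Int.fract (u (j1:ℕ) i)| < 1 :=
      Int.abs_sub_lt_one_of_floor_eq_floor hfi
    simp only []
    have hdiff : ((((t0 : ℤ) * (((j2:ℕ):ℤ) - ((j1:ℕ):ℤ))) : ℤ) : ℝ) * a i -
        ((⌊u (j2:ℕ) i⌋ - ⌊u (j1:ℕ) i⌋ : ℤ) : ℝ)
        = Int.fract (u (j2:ℕ) i) - Int.fract (u (j1:ℕ) i) := by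
      simp only [Int.fract, u]
      push_cast
      ring
    rw [hdiff, le_div_iff₀ hqR]
    have h2 : (q:ℝ) * |Int.fract (u (j2:ℕ) i) - Int.fract (u (j1:ℕ) i)| ≤ 1 := by
      rw [← abs_of_pos hqR, ← abs_mul, mul_sub]
      exact habs.le
    nlinarith [abs_nonneg (Int.fract (u (j2:ℕ) i) - Int.fract (u (j1:ℕ) i))]
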